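/- Let $q \ge r \ge 2$ be integers, $\alpha > 1$ a real number, $Q$ an $r$-graph on $q$ vertices, and $\delta \in (0,1)$. There exists $N_1 = N_1(\delta, q, \alpha)$ such that the following holds for every $n \ge N_1$: if $\mathcal{H}$ is an $r$-graph on vertex set $[n]$ and $\mathbf{x} = (x_1,\ldots,x_n)$ is a nonnegative vector in $\mathrm{OPT}_{\alpha,Q}(\mathcal{H})$ with some coordinate satisfying $x_i \le (1-\delta) n^{-1/\alpha}$, then the induced subgraph $\mathcal{H} - i$ obtained by deleting vertex $i$ satisfies $\lambda_{\alpha,Q}(\mathcal{H} - i) \ge \big(1 - \frac{q(\alpha-1)}{\alpha}\big(1 - \frac{\delta}{2}\big)\frac{1}{n}\big)\, \lambda_{\alpha,Q}(\mathcal{H})$. -/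

import Mathlib

open scoped Classical
open Finset Filter Real

/-- An `r`-uniform hypergraph on vertex set `Fin n`. -/
structure RGraph (r n : ℕ) where
  edges : Finset (Finset (Fin n))
  card_eq : ∀ e ∈ edges, e.card = r

/-- The set (as a `Finset`) of injective homomorphisms from `Q` to `H`. -/
noncomputable def Inj {r a b : ℕ} (Q : RGraph r a) (H : RGraph r b) :
    Finset (Fin a → Fin b) :=
  Finset.univ.filter fun φ => Function.Injective φ ∧ ∀ e ∈ Q.edges, e.image φ ∈ H.edges

/-- The Lagrangian `Q`-polynomial of `H`. -/
noncomputable def lagPoly {r a n : ℕ} (Q : RGraph r a) (H : RGraph r n)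
    (x : Fin n → ℝ) : ℝ :=
  ∑ φ ∈ Inj Q H, ∏ i ∈ Finset.univ.image φ, x i

/-- The domain `Δ_α^{n-1} = {x : |x_1|^α + ⋯ + |x_n|^α = 1}`. -/
def simplex (α : ℝ) (n : ℕ) : Set (Fin n → ℝ) :=
  {x | ∑ i, |x i| ^ α = 1}

/-- The `(α,Q)`-spectral radius of `H`. -/
noncomputable def specRad (α : ℝ) {r a n : ℕ} (Q : RGraph r a) (H : RGraph r n) : ℝ :=
  sSup (lagPoly Q H '' simplex α n)

/-- The set of optimal vectors. -/
noncomputable def OPT (α : ℝ) {r a n : ℕ} (Q : RGraph r a) (H : RGraph r n) :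
    Set (Fin n → ℝ) :=
  {x ∈ simplex α n | lagPoly Q H x = specRad α Q H}
/-- The induced subgraph `H - i` obtained by deleting the vertex `i`, with the remaining
vertices relabelled by the order-preserving bijection `Fin.succAbove i`. -/
def delVertex {r n : ℕ} (H : RGraph r (n + 1)) (i : Fin (n + 1)) : RGraph r n where
  edges := Finset.univ.filter fun e : Finset (Fin n) => e.image i.succAbove ∈ H.edges
  card_eq := by
    intro e he
    rw [Finset.mem_filter] at he
    have h := H.card_eq _ he.2
    rwa [Finset.card_image_of_injective _ Fin.succAbove_right_injective] at h

-- ### combinatorial auxiliary definitions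

noncomputable def Aout {r q n : ℕ} (Q : RGraph r q) (H : RGraph r n) (i : Fin n)
    (x : Fin n → ℝ) : ℝ :=
  ∑ φ ∈ (Inj Q H).filter (fun φ => i ∉ Finset.univ.image φ),
    ∏ j ∈ Finset.univ.image φ, x j

noncomputable def Din {r q n : ℕ} (Q : RGraph r q) (H : RGraph r n) (i : Fin n)
    (x : Fin n → ℝ) : ℝ :=
  ∑ φ ∈ (Inj Q H).filter (fun φ => i ∈ Finset.univ.image φ),
    ∏ j ∈ (Finset.univ.image φ).erase i, x j

lemma card_image_inj {r q n : ℕ} {Q : RGraph r q} {H : RGraph r n} {φ : Fin q → Fin n}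
    (hφ : φ ∈ Inj Q H) : (Finset.univ.image φ).card = q := by
  rw [Inj, Finset.mem_filter] at hφ
  rw [Finset.card_image_of_injective _ hφ.2.1, Finset.card_univ, Fintype.card_fin]

lemma lagPoly_decomp {r q n : ℕ} (Q : RGraph r q) (H : RGraph r n) (i : Fin n)
    (z : Fin n → ℝ) : lagPoly Q H z = z i * Din Q H i z + Aout Q H i z := by
  rw [lagPoly, Din, Aout, Finset.mul_sum,
    ← Finset.sum_filter_add_sum_filter_not (Inj Q H) (fun φ => i ∈ Finset.univ.image φ)]
  congr 1
  apply Finset.sum_congr rfl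
  intro φ hφ
  rw [Finset.mem_filter] at hφ
  exact (Finset.mul_prod_erase _ _ hφ.2).symm

lemma Din_scale {r q n : ℕ} (Q : RGraph r q) (H : RGraph r n) (i : Fin n)
    (x : Fin n → ℝ) (κ v : ℝ) :
    Din Q H i (fun j => if j = i then v else κ * x j) = κ ^ (q - 1) * Din Q H i x := by
  rw [Din, Din, Finset.mul_sum]
  apply Finset.sum_congr rfl
  intro φ hφ
  rw [Finset.mem_filter] at hφ
  have hcard : ((Finset.univ.image φ).erase i).card = q - 1 := by
    rw [Finset.card_erase_of_mem hφ.2, card_image_inj hφ.1]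
  have : ∀ j ∈ (Finset.univ.image φ).erase i,
      (if j = i then v else κ * x j) = κ * x j := by
    intro j hj
    rw [if_neg (Finset.ne_of_mem_erase hj)]
  rw [Finset.prod_congr rfl this, Finset.prod_mul_distrib, Finset.prod_const, hcard]

lemma Aout_scale {r q n : ℕ} (Q : RGraph r q) (H : RGraph r n) (i : Fin n)
    (x : Fin n → ℝ) (κ v : ℝ) :
    Aout Q H i (fun j => if j = i then v else κ * x j) = κ ^ q * Aout Q H i x := by
  rw [Aout, Aout, Finset.mul_sum]
  apply Finset.sum_congr rfl
  intro φ hφ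
  rw [Finset.mem_filter] at hφ
  have : ∀ j ∈ Finset.univ.image φ,
      (if j = i then v else κ * x j) = κ * x j := by
    intro j hj
    rw [if_neg]; intro h; exact hφ.2 (h ▸ hj)
  rw [Finset.prod_congr rfl this, Finset.prod_mul_distrib, Finset.prod_const,
    card_image_inj hφ.1]

lemma Aout_nonneg {r q n : ℕ} (Q : RGraph r q) (H : RGraph r n) (i : Fin n)
    {x : Fin n → ℝ} (hx : ∀ j, 0 ≤ x j) : 0 ≤ Aout Q H i x :=
  Finset.sum_nonneg fun φ _ => Finset.prod_nonneg fun j _ => hx j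

lemma Din_nonneg {r q n : ℕ} (Q : RGraph r q) (H : RGraph r n) (i : Fin n)
    {x : Fin n → ℝ} (hx : ∀ j, 0 ≤ x j) : 0 ≤ Din Q H i x :=
  Finset.sum_nonneg fun φ _ => Finset.prod_nonneg fun j _ => hx j

lemma lagPoly_del {r q n : ℕ} (Q : RGraph r q) (H : RGraph r (n+1)) (i : Fin (n+1))
    (x : Fin (n+1) → ℝ) (κ' : ℝ) :
    lagPoly Q (delVertex H i) (fun k => κ' * x (i.succAbove k))
      = κ' ^ q * Aout Q H i x := by
  rw [lagPoly, Aout, Finset.mul_sum]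
  refine Finset.sum_bij (fun φ _ => i.succAbove ∘ φ) ?_ ?_ ?_ ?_
  · -- maps into
    intro ψ hψ
    show i.succAbove ∘ ψ ∈ (Inj Q H).filter (fun φ => i ∉ Finset.univ.image φ)
    rw [Inj, Finset.mem_filter] at hψ
    obtain ⟨-, hinj, hedge⟩ := hψ
    rw [Finset.mem_filter, Inj, Finset.mem_filter]
    refine ⟨⟨Finset.mem_univ _, Fin.succAbove_right_injective.comp hinj, ?_⟩, ?_⟩
    · intro e he
      have h := hedge e he
      rw [delVertex, Finset.mem_filter] at h
      have h2 := h.2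
      rwa [Finset.image_image] at h2
    · simp only [Finset.mem_image, Finset.mem_univ, true_and, not_exists]
      intro a
      exact Fin.succAbove_ne i (ψ a)
  · -- injective
    intro ψ₁ h₁ ψ₂ h₂ h
    have h' : i.succAbove ∘ ψ₁ = i.succAbove ∘ ψ₂ := h
    funext a
    exact Fin.succAbove_right_injective (congrFun h' a)
  · -- surjective
    intro φ hφ
    rw [Finset.mem_filter, Inj, Finset.mem_filter] at hφ
    obtain ⟨⟨-, hinj, hedge⟩, hnot⟩ := hφ
    have hne : ∀ a, φ a ≠ i := by
      intro a h
      exact hnot (Finset.mem_image.mpr ⟨a, Finset.mem_univ a, h⟩)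
    choose ψ hψ using fun a => Fin.exists_succAbove_eq (hne a)
    have hcomp : i.succAbove ∘ ψ = φ := funext hψ
    refine ⟨ψ, ?_, hcomp⟩
    rw [Inj, Finset.mem_filter]
    refine ⟨Finset.mem_univ _, ?_, ?_⟩
    · have : Function.Injective (i.succAbove ∘ ψ) := hcomp ▸ hinj
      exact Function.Injective.of_comp this
    · intro e he
      rw [delVertex, Finset.mem_filter]
      refine ⟨Finset.mem_univ _, ?_⟩
      rw [Finset.image_image, hcomp]
      exact hedge e he
  · -- values
    intro ψ hψ
    show (∏ j ∈ Finset.univ.image ψ, κ' * x (i.succAbove j))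
        = κ' ^ q * ∏ j ∈ Finset.univ.image (i.succAbove ∘ ψ), x j
    rw [Inj, Finset.mem_filter] at hψ
    obtain ⟨-, hinj, -⟩ := hψ
    have hcard : (Finset.univ.image ψ).card = q := by
      rw [Finset.card_image_of_injective _ hinj, Finset.card_univ, Fintype.card_fin]
    rw [Finset.prod_mul_distrib, Finset.prod_const, hcard]
    congr 1
    rw [show Finset.univ.image (i.succAbove ∘ ψ) = (Finset.univ.image ψ).image i.succAbove
        from (Finset.image_image).symm]
    rw [Finset.prod_image (fun a _ b _ h => Fin.succAbove_right_injective h)]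

lemma lagPoly_le_specRad {r a n : ℕ} (Q : RGraph r a) (H : RGraph r n) {α : ℝ} (hα : (0:ℝ) < α)
    {y : Fin n → ℝ} (hy : y ∈ simplex α n) : lagPoly Q H y ≤ specRad α Q H := by
  apply le_csSup
  · refine ⟨((Inj Q H).card : ℝ), ?_⟩
    rintro v ⟨w, hw, rfl⟩
    simp only [simplex, Set.mem_setOf_eq] at hw
    have habs : ∀ j, |w j| ≤ 1 := by
      intro j
      by_contra hj
      push_neg at hj
      have h1 : (1:ℝ) < |w j| ^ α :=
        (Real.one_lt_rpow_iff_of_pos (lt_trans one_pos hj)).mpr (Or.inl ⟨hj, hα⟩)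
      have h2 : |w j| ^ α ≤ 1 := by
        rw [← hw]
        exact Finset.single_le_sum (fun k _ => Real.rpow_nonneg (abs_nonneg _) α)
          (Finset.mem_univ j)
      linarith
    calc lagPoly Q H w ≤ ∑ φ ∈ Inj Q H, |∏ j ∈ Finset.univ.image φ, w j| :=
          Finset.sum_le_sum fun φ _ => le_abs_self _
      _ ≤ ∑ φ ∈ Inj Q H, 1 := Finset.sum_le_sum fun φ _ => by
          rw [Finset.abs_prod]
          exact Finset.prod_le_one (fun j _ => abs_nonneg _) (fun j _ => habs j)
      _ = ((Inj Q H).card : ℝ) := by rw [Finset.sum_const, nsmul_eq_mul, mul_one]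
  · exact Set.mem_image_of_mem _ hy

lemma rpow_one_div_natpow {a α : ℝ} (ha : 0 ≤ a) (k : ℕ) :
    (a ^ (1/α)) ^ k = a ^ ((k:ℝ)/α) := by
  rw [← Real.rpow_natCast (a ^ (1/α)) k, ← Real.rpow_mul ha]
  congr 1; ring

lemma rpow_one_div_natpow' {a α : ℝ} (ha : 0 ≤ a) (k : ℕ) :
    (a ^ (1/α)) ^ k = (a ^ k) ^ (1/α) := by
  rw [rpow_one_div_natpow ha k, ← Real.rpow_natCast a k, ← Real.rpow_mul ha]
  congr 1; ring



lemma aux_amgm {a : ℝ} (ha : 0 < a) : 2 ≤ a + a⁻¹ := by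
  rw [← sub_nonneg]
  have h : a + a⁻¹ - 2 = (a - 1)^2 / a := by field_simp; ring
  rw [h]; positivity

lemma aux_bern {p w : ℝ} (hp : 0 < p) (hw0 : 0 ≤ w) (hw1 : w < 1) :
    1 - (1 - w) ^ p ≤ p * w / (1 - w) := by
  have h1w : (0:ℝ) < 1 - w := by linarith
  have hx0 : 0 ≤ w / (1 - w) := by positivity
  rcases le_or_gt 1 p with hp1 | hp1
  · have hB := one_add_mul_self_le_rpow_one_add (s := -w) (by linarith) hp1
    rw [show (1 : ℝ) + -w = 1 - w by ring] at hB
    have h2 : 1 - (1-w)^p ≤ p * w := by nlinarith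
    have h3 : p * w ≤ p * w / (1 - w) := by
      rw [le_div_iff₀ h1w]
      nlinarith [mul_nonneg hp.le hw0]
    linarith
  · have hinv : (1 - w)⁻¹ = 1 + w / (1 - w) := by field_simp; ring
    have hB := rpow_one_add_le_one_add_mul_self (s := w / (1-w)) (by linarith) hp.le hp1.le
    have hpow : ((1 - w)⁻¹) ^ p = ((1-w)^p)⁻¹ := Real.inv_rpow h1w.le p
    have ha : 0 < (1 - w) ^ p := Real.rpow_pos_of_pos h1w p
    have hAM := aux_amgm ha
    rw [hinv] at hpow
    have : ((1-w)^p)⁻¹ ≤ 1 + p * (w / (1-w)) := by rw [← hpow]; exact hB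
    have hfin : 1 - (1-w)^p ≤ p * (w / (1-w)) := by linarith
    rwa [mul_div_assoc]

lemma aux_gain {p t : ℝ} (hp : 0 < p) (ht0 : 0 ≤ t) (ht1 : t < 1) :
    (1 + p * t) * (1 - t) ^ p ≤ 1 := by
  have h1t : (0:ℝ) < 1 - t := by linarith
  have hlog : Real.log (1 - t) ≤ -t := by
    have := Real.log_le_sub_one_of_pos h1t; linarith
  have hrw : (1 - t) ^ p = Real.exp (Real.log (1 - t) * p) := Real.rpow_def_of_pos h1t p
  have h2 : (1 - t) ^ p ≤ Real.exp (-(p * t)) := by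
    rw [hrw]; apply Real.exp_le_exp.mpr; nlinarith
  have h3 : 1 + p * t ≤ Real.exp (p * t) := by
    have := Real.add_one_le_exp (p * t); linarith
  calc (1 + p*t) * (1-t)^p ≤ Real.exp (p*t) * Real.exp (-(p*t)) := by
        apply mul_le_mul h3 h2 (by positivity) (by positivity)
    _ = 1 := by rw [← Real.exp_add]; simp

lemma aux_root {α W : ℝ} (hα : 1 ≤ α) (hW : 1 ≤ W) :
    (W - 1) / (α * W) ≤ W ^ (1/α) - 1 := by
  have hα0 : (0:ℝ) < α := by linarith
  have hW0 : (0:ℝ) < W := by linarith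
  set y := W ^ (1/α) with hy
  have hy1 : 1 ≤ y := Real.one_le_rpow hW (by positivity)
  have hy0 : 0 < y := lt_of_lt_of_le one_pos hy1
  have hyα : y ^ α = W := by
    rw [hy, ← Real.rpow_mul hW0.le, one_div, inv_mul_cancel₀ hα0.ne', Real.rpow_one]
  set w' : ℝ := 1 - y⁻¹ with hw'
  have hinvy : y⁻¹ ≤ 1 := by
    rw [inv_le_one_iff₀]; right; exact hy1
  have hw'0 : 0 ≤ w' := by rw [hw']; linarith
  have hw'1 : w' < 1 := by
    have h0 : 0 < y⁻¹ := by positivity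
    rw [hw']; linarith
  have hB := aux_bern hα0 hw'0 hw'1
  have h1w' : (1:ℝ) - w' = y⁻¹ := by rw [hw']; ring
  rw [h1w'] at hB
  have hinvpow : (y⁻¹) ^ α = W⁻¹ := by rw [Real.inv_rpow hy0.le, hyα]
  rw [hinvpow] at hB
  -- hB : 1 - W⁻¹ ≤ α * w' / y⁻¹
  have hBr : 1 - W⁻¹ ≤ α * (y - 1) := by
    have hiy : y⁻¹ * y = 1 := inv_mul_cancel₀ hy0.ne'
    have : α * w' / y⁻¹ = α * (y - 1) := by
      rw [hw']
      field_simp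
    linarith [hB.trans_eq this]
  rw [div_le_iff₀ (by positivity)]
  have hWinv : W⁻¹ * W = 1 := inv_mul_cancel₀ hW0.ne'
  nlinarith [mul_le_mul_of_nonneg_right hBr hW0.le]



set_option maxHeartbeats 2000000 in
/-- **Lemma (deleting a light vertex, first part):** removing a vertex of small weight
does not decrease the `(α,Q)`-spectral radius too much. (The `n` of the paper is the
`n + 1` here.) -/
theorem delete_light_vertex {r q : ℕ} (hr : 2 ≤ r) (hrq : r ≤ q)
    {α δ : ℝ} (hα : 1 < α) (hδ : δ ∈ Set.Ioo (0 : ℝ) 1) (Q : RGraph r q) :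
    ∃ N1 : ℕ, ∀ n : ℕ, N1 ≤ n + 1 → ∀ H : RGraph r (n + 1),
      ∀ x ∈ OPT α Q H, (∀ j, 0 ≤ x j) →
      ∀ i : Fin (n + 1), x i ≤ (1 - δ) * ((n : ℝ) + 1) ^ (-(1 : ℝ) / α) →
        (1 - q * (α - 1) / α * (1 - δ / 2) * (1 / ((n : ℝ) + 1))) * specRad α Q H
          ≤ specRad α Q (delVertex H i) := by
  obtain ⟨hδ0, hδ1⟩ := hδ
  have hα0 : (0:ℝ) < α := by linarith
  have hq2 : 2 ≤ q := le_trans hr hrq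
  have hqR : (2:ℝ) ≤ (q:ℝ) := by exact_mod_cast hq2
  have hq0 : (0:ℝ) < (q:ℝ) := by linarith
  have h1δ : (0:ℝ) < 1 - δ := by linarith
  obtain ⟨ε₀, hε₀def⟩ : ∃ y : ℝ, y = (α - 1) * δ / (2 * (1 - δ)) := ⟨_, rfl⟩
  have hε₀0 : 0 < ε₀ := by rw [hε₀def]; exact div_pos (mul_pos (by linarith) hδ0) (by linarith)
  obtain ⟨ε₁, hε₁def⟩ : ∃ y : ℝ, y = min (ε₀ / (2 * α)) 1 := ⟨_, rfl⟩
  have hε₁0 : 0 < ε₁ := by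
    rw [hε₁def]; exact lt_min (div_pos hε₀0 (by linarith)) one_pos
  have hε₁1 : ε₁ ≤ 1 := by rw [hε₁def]; exact min_le_right _ _
  have hαε₁ : α * ε₁ ≤ ε₀ / 2 := by
    have h1 : ε₁ ≤ ε₀ / (2 * α) := by rw [hε₁def]; exact min_le_left _ _
    have h2 : ε₁ * (2 * α) ≤ ε₀ := (le_div_iff₀ (by linarith)).mp h1
    linarith [h2]
  have hαε₀ : (0:ℝ) < α + ε₀ := by linarith
  obtain ⟨θ, hθdef⟩ : ∃ y : ℝ, y = ε₀ / (8 * (α + ε₀)) := ⟨_, rfl⟩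
  have hθ0 : 0 < θ := by rw [hθdef]; exact div_pos hε₀0 (by linarith)
  have hθ8 : θ * (8 * (α + ε₀)) = ε₀ := by
    rw [hθdef]; exact div_mul_cancel₀ _ (by linarith)
  have hθ1 : θ < 1 := by
    rw [hθdef, div_lt_one (by linarith)]; linarith
  refine ⟨⌈(4:ℝ) + 8 * q / (ε₁ * θ) + 16 * (α + ε₀) / ε₀⌉₊, ?_⟩
  intro n hn H x hx hxnn i hxi
  set m : ℝ := (n : ℝ) + 1 with hmdef
  set c : ℝ := q * (α - 1) / α * (1 - δ / 2) with hcdef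
  have hmN : (4:ℝ) + 8 * q / (ε₁ * θ) + 16 * (α + ε₀) / ε₀ ≤ m := by
    calc (4:ℝ) + 8 * q / (ε₁ * θ) + 16 * (α + ε₀) / ε₀
        ≤ (⌈(4:ℝ) + 8 * q / (ε₁ * θ) + 16 * (α + ε₀) / ε₀⌉₊ : ℝ) := Nat.le_ceil _
      _ ≤ ((n + 1 : ℕ) : ℝ) := by exact_mod_cast hn
      _ = m := by rw [hmdef]; push_cast; ring
  have hterm1 : (0:ℝ) ≤ 8 * q / (ε₁ * θ) :=
    div_nonneg (by positivity) (mul_pos hε₁0 hθ0).le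
  have hterm2 : (0:ℝ) ≤ 16 * (α + ε₀) / ε₀ :=
    div_nonneg (by linarith) hε₀0.le
  have hm4 : (4:ℝ) ≤ m := by linarith
  have hm0 : (0:ℝ) < m := by linarith
  have hmq : 8 * q / (ε₁ * θ) ≤ m := by linarith
  have hmε : 16 * (α + ε₀) / ε₀ ≤ m := by linarith
  obtain ⟨hxs, hxopt⟩ := hx
  have hsum1 : ∑ j, (x j) ^ α = 1 := by
    have h := hxs
    simp only [simplex, Set.mem_setOf_eq] at h
    rw [← h]
    exact Finset.sum_congr rfl fun j _ => by rw [abs_of_nonneg (hxnn j)]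
  obtain ⟨t, htdef⟩ : ∃ y : ℝ, y = (x i) ^ α := ⟨_, rfl⟩
  have ht0 : 0 ≤ t := by rw [htdef]; exact Real.rpow_nonneg (hxnn i) α
  have hrest : ∑ k : Fin n, (x (i.succAbove k)) ^ α = 1 - t := by
    have h := Fin.sum_univ_succAbove (fun j => (x j) ^ α) i
    rw [hsum1] at h
    rw [htdef]
    linarith [h]
  have hmα : ((m : ℝ) ^ (-(1:ℝ)/α)) ^ α = m⁻¹ := by
    rw [← Real.rpow_mul hm0.le, div_mul_cancel₀ _ hα0.ne', Real.rpow_neg_one]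
  have htle : t ≤ (1 - δ) ^ α / m := by
    have h1 : (x i) ^ α ≤ ((1 - δ) * m ^ (-(1:ℝ)/α)) ^ α :=
      Real.rpow_le_rpow (hxnn i) hxi hα0.le
    rw [Real.mul_rpow h1δ.le (Real.rpow_nonneg hm0.le _), hmα] at h1
    rw [← htdef] at h1
    rw [div_eq_mul_inv]
    exact h1
  have ht₀1 : (1 - δ) ^ α ≤ 1 - δ := by
    have h := Real.rpow_le_rpow_of_exponent_ge h1δ (by linarith) hα.le
    rwa [Real.rpow_one] at h
  have ht₀0 : (0:ℝ) < (1 - δ) ^ α := Real.rpow_pos_of_pos h1δ α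
  have htm : t ≤ 1 / m := by
    refine htle.trans ?_
    rw [div_le_div_iff₀ hm0 hm0]
    exact mul_le_mul_of_nonneg_right (by linarith) hm0.le
  have ht1 : t < 1 := by
    have h : (1:ℝ)/m < 1 := by rw [div_lt_one hm0]; linarith
    linarith
  have h1t : (0:ℝ) < 1 - t := by linarith
  obtain ⟨p, hpdef⟩ : ∃ y : ℝ, y = (q : ℝ) / α := ⟨_, rfl⟩
  have hp0 : 0 < p := by rw [hpdef]; exact div_pos hq0 hα0
  have hc0 : 0 ≤ c := by
    rw [hcdef]
    apply mul_nonneg (div_nonneg (mul_nonneg hq0.le (by linarith)) hα0.le) (by linarith)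
  have hcm0 : 0 ≤ c / m := div_nonneg hc0 hm0.le
  obtain ⟨A, hAdef⟩ : ∃ y : ℝ, y = Aout Q H i x := ⟨_, rfl⟩
  obtain ⟨D, hDdef⟩ : ∃ y : ℝ, y = Din Q H i x := ⟨_, rfl⟩
  have hA0 : 0 ≤ A := by rw [hAdef]; exact Aout_nonneg Q H i hxnn
  have hD0 : 0 ≤ D := by rw [hDdef]; exact Din_nonneg Q H i hxnn
  have hlam : specRad α Q H = x i * D + A := by
    rw [← hxopt, lagPoly_decomp Q H i x, ← hDdef, ← hAdef]
  -- the restriction vector and the gain factor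
  obtain ⟨κ', hκ'def⟩ : ∃ y : ℝ, y = ((1 - t) ^ (1/α))⁻¹ := ⟨_, rfl⟩
  have hbase0 : (0:ℝ) < (1 - t) ^ (1/α) := Real.rpow_pos_of_pos h1t _
  have hκ'0 : 0 ≤ κ' := by rw [hκ'def]; exact inv_nonneg.2 hbase0.le
  have hbα : ((1 - t) ^ (1/α)) ^ α = 1 - t := by
    rw [← Real.rpow_mul h1t.le, one_div_mul_cancel hα0.ne', Real.rpow_one]
  have hκ'α : κ' ^ α = (1 - t)⁻¹ := by
    rw [hκ'def, Real.inv_rpow hbase0.le, hbα]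
  have hy : (fun k : Fin n => κ' * x (i.succAbove k)) ∈ simplex α n := by
    simp only [simplex, Set.mem_setOf_eq]
    have hterm : ∀ k : Fin n, |κ' * x (i.succAbove k)| ^ α
        = (1 - t)⁻¹ * (x (i.succAbove k)) ^ α := by
      intro k
      rw [abs_of_nonneg (mul_nonneg hκ'0 (hxnn _)), Real.mul_rpow hκ'0 (hxnn _), hκ'α]
    rw [Finset.sum_congr rfl (fun k _ => hterm k), ← Finset.mul_sum, hrest,
      inv_mul_cancel₀ h1t.ne']
  have hκ'q : κ' ^ q = ((1 - t) ^ p)⁻¹ := by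
    rw [hκ'def, inv_pow, rpow_one_div_natpow h1t.le q, ← hpdef]
  have hgain2 : 1 + p * t ≤ κ' ^ q := by
    have hpos : (0:ℝ) < (1 - t) ^ p := Real.rpow_pos_of_pos h1t p
    rw [hκ'q, inv_eq_one_div, le_div_iff₀ hpos]
    exact aux_gain hp0 ht0 ht1
  have hdel : κ' ^ q * A ≤ specRad α Q (delVertex H i) := by
    rw [hAdef, ← lagPoly_del Q H i x κ']
    exact lagPoly_le_specRad Q (delVertex H i) hα0 hy
  -- the key inequality
  have hkey : x i * D ≤ (p * t + c / m) * A := by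
    rcases eq_or_lt_of_le (hxnn i) with hxi0 | hxi0
    · rw [← hxi0, zero_mul]
      apply mul_nonneg _ hA0
      have h1 : 0 ≤ p * t := mul_nonneg hp0.le ht0
      linarith
    · have ht0' : 0 < t := by rw [htdef]; exact Real.rpow_pos_of_pos hxi0 α
      obtain ⟨s, hsdef⟩ : ∃ y : ℝ, y = 1 + ε₁ := ⟨_, rfl⟩
      have hs0 : (0:ℝ) ≤ s := by rw [hsdef]; linarith
      have hs1 : 1 < s := by rw [hsdef]; linarith
      have hs2 : s ≤ 2 := by rw [hsdef]; linarith
      obtain ⟨u, hudef⟩ : ∃ y : ℝ, y = s * t := ⟨_, rfl⟩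
      have hu0 : 0 < u := by rw [hudef]; exact mul_pos (by linarith) ht0'
      have hut : t < u := by
        rw [hudef]
        have h := mul_lt_mul_of_pos_right hs1 ht0'
        linarith
      have hule : u ≤ 2 / m := by
        rw [hudef]
        calc s * t ≤ 2 * (1/m) := mul_le_mul hs2 htm ht0 (by norm_num)
          _ = 2 / m := by ring
      have hu2 : u ≤ 1/2 := by
        refine hule.trans ?_
        rw [div_le_div_iff₀ hm0 (by norm_num)]
        linarith
      have h1u : (0:ℝ) < 1 - u := by linarith
      obtain ⟨ratio, hratiodef⟩ : ∃ y : ℝ, y = (1 - u) / (1 - t) := ⟨_, rfl⟩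
      have hratio0 : 0 < ratio := by rw [hratiodef]; exact div_pos h1u h1t
      have hratio1 : ratio ≤ 1 := by
        rw [hratiodef, div_le_one h1t]; linarith
      obtain ⟨κ, hκdef⟩ : ∃ y : ℝ, y = ratio ^ (1/α) := ⟨_, rfl⟩
      have hκ0 : 0 ≤ κ := by rw [hκdef]; exact Real.rpow_nonneg hratio0.le _
      obtain ⟨σ', hσdef⟩ : ∃ y : ℝ, y = s ^ (1/α) := ⟨_, rfl⟩
      obtain ⟨v, hvdef⟩ : ∃ y : ℝ, y = u ^ (1/α) := ⟨_, rfl⟩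
      have hv0 : 0 ≤ v := by rw [hvdef]; exact Real.rpow_nonneg hu0.le _
      have hκα : κ ^ α = ratio := by
        rw [hκdef, ← Real.rpow_mul hratio0.le, one_div_mul_cancel hα0.ne',
          Real.rpow_one]
      have hvα : v ^ α = u := by
        rw [hvdef, ← Real.rpow_mul hu0.le, one_div_mul_cancel hα0.ne', Real.rpow_one]
      have hz : (fun j => if j = i then v else κ * x j) ∈ simplex α (n+1) := by
        simp only [simplex, Set.mem_setOf_eq]
        have hsplit : ∑ j, |if j = i then v else κ * x j| ^ α
            = |if i = i then v else κ * x i| ^ α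
              + ∑ k : Fin n, |if i.succAbove k = i then v
                  else κ * x (i.succAbove k)| ^ α :=
          Fin.sum_univ_succAbove (fun j => |if j = i then v else κ * x j| ^ α) i
        have h2 : ∀ k : Fin n, |if i.succAbove k = i then v
            else κ * x (i.succAbove k)| ^ α = ratio * (x (i.succAbove k)) ^ α := by
          intro k
          rw [if_neg (Fin.succAbove_ne i k), abs_of_nonneg (mul_nonneg hκ0 (hxnn _)),
            Real.mul_rpow hκ0 (hxnn _), hκα]
        rw [hsplit, if_pos rfl, abs_of_nonneg hv0, hvα,
          Finset.sum_congr rfl (fun k _ => h2 k), ← Finset.mul_sum, hrest, hratiodef,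
          div_mul_cancel₀ _ h1t.ne']
        ring
      have hzval : lagPoly Q H (fun j => if j = i then v else κ * x j)
          = v * (κ ^ (q-1) * D) + κ ^ q * A := by
        rw [lagPoly_decomp Q H i (fun j => if j = i then v else κ * x j),
          Din_scale, Aout_scale, ← hDdef, ← hAdef]
        simp
      have hzle : v * (κ ^ (q-1) * D) + κ ^ q * A ≤ x i * D + A := by
        have h := lagPoly_le_specRad Q H hα0 hz
        rwa [hzval, hlam] at h
      have ht_root : t ^ (1/α) = x i := by
        rw [htdef, ← Real.rpow_mul (hxnn i), mul_one_div, div_self hα0.ne',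
          Real.rpow_one]
      have hv_eq : v = σ' * x i := by
        rw [hvdef, hudef, Real.mul_rpow hs0 ht0, ht_root, ← hσdef]
      have hineq : x i * ((σ' * κ ^ (q-1) - 1) * D) ≤ (1 - κ ^ q) * A := by
        rw [hv_eq] at hzle
        linarith [hzle]
      obtain ⟨W, hWdef⟩ : ∃ y : ℝ, y = s * ratio ^ (q-1) := ⟨_, rfl⟩
      have hratpow1 : ratio ^ (q-1) ≤ 1 := pow_le_one₀ hratio0.le hratio1
      have hratpow0 : 0 ≤ ratio ^ (q-1) := pow_nonneg hratio0.le _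
      have hWles : W ≤ 1 + ε₁ := by
        rw [hWdef, hsdef]
        have h := mul_le_mul_of_nonneg_left hratpow1 (show (0:ℝ) ≤ 1 + ε₁ by linarith)
        linarith
      have hratge : 1 - u ≤ ratio := by
        rw [hratiodef, le_div_iff₀ h1t]
        have h := mul_nonneg h1u.le ht0
        linarith [h]
      have h8q : 8 * (q:ℝ) ≤ m * (ε₁ * θ) := by
        rwa [div_le_iff₀ (mul_pos hε₁0 hθ0)] at hmq
      have hqu : (q:ℝ) * u ≤ ε₁ * θ / 4 := by
        have h1 : (q:ℝ) * u ≤ (q:ℝ) * (2/m) := mul_le_mul_of_nonneg_left hule hq0.le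
        have h2 : (q:ℝ) * (2/m) ≤ ε₁ * θ / 4 := by
          rw [show (q:ℝ) * (2/m) = 2*(q:ℝ)/m from by ring,
            div_le_div_iff₀ hm0 (by norm_num : (0:ℝ) < 4)]
          linarith [h8q]
        linarith
      have hpow_low : 1 - (q:ℝ) * u ≤ ratio ^ (q-1) := by
        have hb := one_add_mul_le_pow (a := -u) (by linarith) (q-1)
        have hcast : ((q-1:ℕ):ℝ) = (q:ℝ) - 1 := by
          rw [Nat.cast_sub (by linarith : 1 ≤ q)]; norm_num
        rw [show (1:ℝ) + -u = 1 - u from by ring, hcast] at hb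
        have hpowmono : (1-u)^(q-1) ≤ ratio^(q-1) := pow_le_pow_left₀ h1u.le hratge _
        linarith [hb, hpowmono, hu0.le]
      have hWge : 1 + ε₁ * (1 - θ) ≤ W := by
        rw [hWdef, hsdef]
        linarith [mul_le_mul_of_nonneg_left hpow_low (show (0:ℝ) ≤ 1 + ε₁ by linarith),
          mul_nonneg (mul_nonneg (show (0:ℝ) ≤ 1 - ε₁ by linarith) hq0.le) hu0.le,
          hqu, mul_nonneg hε₁0.le hθ0.le]
      have hW1 : 1 < W := by
        have h := mul_pos hε₁0 (show (0:ℝ) < 1 - θ by linarith)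
        linarith [hWge]
      have hσκW : σ' * κ ^ (q-1) = W ^ (1/α) := by
        rw [hκdef, rpow_one_div_natpow' hratio0.le (q-1), hσdef, hWdef,
          ← Real.mul_rpow hs0 hratpow0]
      have hposαε : (0:ℝ) < α * (1 + ε₁) := mul_pos hα0 (by linarith)
      have hdenom_low : ε₁ * (1-θ) / (α * (1+ε₁)) ≤ σ' * κ ^ (q-1) - 1 := by
        have h1 := aux_root hα.le hW1.le
        rw [← hσκW] at h1
        have h2 : ε₁ * (1-θ) / (α * (1+ε₁)) ≤ (W-1)/(α*W) := by
          rw [div_le_div_iff₀ hposαε (mul_pos hα0 (by linarith : (0:ℝ) < W))]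
          linarith [mul_le_mul_of_nonneg_left hWles
              (mul_nonneg hα0.le (mul_nonneg hε₁0.le (by linarith : (0:ℝ) ≤ 1-θ))),
            mul_le_mul_of_nonneg_left hWge (mul_nonneg hα0.le (by linarith : (0:ℝ) ≤ 1+ε₁))]
        linarith
      have hdenom0 : 0 < σ' * κ ^ (q-1) - 1 :=
        lt_of_lt_of_le (div_pos (mul_pos hε₁0 (by linarith)) hposαε) hdenom_low
      have hκqp : κ ^ q = ratio ^ p := by
        rw [hκdef, rpow_one_div_natpow hratio0.le q, ← hpdef]
      have hb : 1 - ratio ^ p ≤ p * (1 - ratio) / ratio := by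
        have hw0 : 0 ≤ 1 - ratio := by linarith
        have hw1 : 1 - ratio < 1 := by linarith [hratio0]
        have h := aux_bern hp0 hw0 hw1
        rwa [show (1:ℝ) - (1 - ratio) = ratio from by ring] at h
      have heq : p * (1 - ratio) / ratio = p * (u - t) / (1 - u) := by
        rw [hratiodef]
        field_simp
        ring
      have hut_eq : u - t = ε₁ * t := by rw [hudef, hsdef]; ring
      have hnum : 1 - κ ^ q ≤ p * (ε₁ * t) / (1 - u) := by
        rw [hκqp, ← hut_eq, ← heq]
        exact hb
      have htmm : t * m ≤ 1 - δ := by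
        have h1 : t * m ≤ (1-δ)^α := by rw [← le_div_iff₀ hm0]; exact htle
        linarith [ht₀1]
      have hceq : c = p * ((α-1) * (1 - δ/2)) := by
        rw [hcdef, hpdef]; field_simp
      have hε₀eq : ε₀ * (2 * (1-δ)) = (α-1) * δ := by
        rw [hε₀def]; exact div_mul_cancel₀ _ (by linarith)
      have hcmlow : p * t * (α - 1 + ε₀) ≤ c / m := by
        rw [le_div_iff₀ hm0]
        have hid : p * (α-1+ε₀) * (1-δ) = c := by
          rw [hceq]; linear_combination (p / 2) * hε₀eq
        calc p * t * (α-1+ε₀) * m = p * (α-1+ε₀) * (t * m) := by ring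
          _ ≤ p * (α-1+ε₀) * (1-δ) :=
              mul_le_mul_of_nonneg_left htmm (mul_nonneg hp0.le (by linarith))
          _ = c := hid
      have hcm : p * t * (α + ε₀) ≤ p * t + c / m := by linarith [hcmlow]
      have hu8 : u * (8 * (α + ε₀)) ≤ ε₀ := by
        have h1 : 16 * (α+ε₀) ≤ m * ε₀ := by rwa [div_le_iff₀ hε₀0] at hmε
        have h2 : u * m ≤ 2 := (le_div_iff₀ hm0).mp hule
        linarith [mul_le_mul_of_nonneg_left h1 hu0.le,
          mul_le_mul_of_nonneg_right h2 hε₀0.le]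
      have hαbal : α * (1 + ε₁) ≤ (α + ε₀) * ((1-θ) * (1-u)) := by
        linarith [hθ8, hu8, hαε₁, mul_nonneg (mul_nonneg hθ0.le hu0.le) hαε₀.le]
      have hstep1 : p * (ε₁ * t) / (1 - u)
          ≤ p * t * (α+ε₀) * (ε₁ * (1-θ)) / (α * (1+ε₁)) := by
        rw [div_le_div_iff₀ h1u hposαε]
        have h := mul_le_mul_of_nonneg_left hαbal
          (mul_nonneg hp0.le (mul_nonneg hε₁0.le ht0))
        linarith [h]
      have hstep2 : p * t * (α+ε₀) * (ε₁ * (1-θ)) / (α * (1+ε₁))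
          ≤ (p * t + c / m) * (σ' * κ ^ (q-1) - 1) := by
        rw [show p * t * (α+ε₀) * (ε₁ * (1-θ)) / (α * (1+ε₁))
            = (p * t * (α+ε₀)) * (ε₁ * (1-θ) / (α * (1+ε₁))) from by ring]
        apply mul_le_mul hcm hdenom_low
          (div_nonneg (mul_nonneg hε₁0.le (by linarith)) hposαε.le)
          (add_nonneg (mul_nonneg hp0.le ht0) hcm0)
      have hnumfin : 1 - κ ^ q ≤ (p * t + c / m) * (σ' * κ ^ (q-1) - 1) :=
        hnum.trans (hstep1.trans hstep2)
      have h5 : (σ' * κ ^ (q-1) - 1) * (x i * D)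
          ≤ (σ' * κ ^ (q-1) - 1) * ((p * t + c / m) * A) := by
        linarith [hineq, mul_le_mul_of_nonneg_right hnumfin hA0]
      exact le_of_mul_le_mul_left h5 hdenom0
  -- final assembly
  have hub : (1 - c / m) * (x i * D + A) ≤ (1 + p * t) * A := by
    linarith [hkey, hA0, mul_nonneg (hxnn i) hD0, hcm0,
      mul_nonneg hcm0 (mul_nonneg (hxnn i) hD0)]
  rw [show c * (1/m) = c / m from mul_one_div c m, hlam]
  exact le_trans hub (le_trans (mul_le_mul_of_nonneg_right hgain2 hA0) hdel)
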